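/- arXiv:2602.04859 — 4 statements merged into one kernel-verified Lean document; each statement's English description precedes it below -/
import Mathlib

section
/- Let n ≥ 1, m ∈ {1,…,n}, and let Ψ : {0,1}^n → ℂ define the vector |ψ⟩ = Σ_{z∈{0,1}^n} Ψ(z)|z⟩ in ℂ^{2^n}. Suppose that for every subset k ⊆ {1,…,n} with |k| = m and every z_k ∈ {0,1}^{n−m}, the quantity p(z_k) = Σ_{ℓ∈{0,1}^m} |Ψ(z_k^ℓ)|² is strictly positive. Then the operator L = C(n,m)^{−1} Σ_k Σ_{z_k} |z_k⟩⟨z_k| ⊗ L_{z_k} satisfies L|ψ⟩ = |ψ⟩. -/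
open Matrix Finset

/-- The bitstring equal to `ℓ` on the qubits in `k` and to `z` on the qubits outside `k`. -/
def mergeString {n : ℕ} (k : Finset (Fin n)) (ℓ : {i // i ∈ k} → Bool)
    (z : {i // i ∉ k} → Bool) : Fin n → Bool :=
  fun i => if h : i ∈ k then ℓ ⟨i, h⟩ else z ⟨i, h⟩

/-- `p(z_k) = Σ_{ℓ ∈ {0,1}^m} |Ψ(z_k^ℓ)|²`. -/
noncomputable def pProb {n : ℕ} (Ψ : (Fin n → Bool) → ℂ) (k : Finset (Fin n))
    (z : {i // i ∉ k} → Bool) : ℝ :=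
  ∑ ℓ : {i // i ∈ k} → Bool, ‖Ψ (mergeString k ℓ z)‖ ^ 2

/-- The vector `|z_k⟩ ⊗ |Ψ_{z_k}⟩` embedded in `ℂ^{2^n}`:
it equals `Ψ(w)/√(p(z_k))` on bitstrings `w` agreeing with `z_k` outside `k`, and `0` elsewhere. -/
noncomputable def psiVec {n : ℕ} (Ψ : (Fin n → Bool) → ℂ) (k : Finset (Fin n))
    (z : {i // i ∉ k} → Bool) : (Fin n → Bool) → ℂ :=
  fun w => if (fun i : {i // i ∉ k} => w i) = z then Ψ w / (Real.sqrt (pProb Ψ k z) : ℂ) else 0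

/-- The operator `L = C(n,m)⁻¹ Σ_{k : |k| = m} Σ_{z_k} |z_k⟩⟨z_k| ⊗ L_{z_k}` where
`L_{z_k} = |Ψ_{z_k}⟩⟨Ψ_{z_k}|`. -/
noncomputable def Lop (n m : ℕ) (Ψ : (Fin n → Bool) → ℂ) :
    Matrix (Fin n → Bool) (Fin n → Bool) ℂ :=
  ((n.choose m : ℂ))⁻¹ •
    ∑ k ∈ Finset.univ.powersetCard m,
      ∑ z : {i // i ∉ k} → Bool, Matrix.vecMulVec (psiVec Ψ k z) (star (psiVec Ψ k z))

lemma mergeString_restrict {n : ℕ} (k : Finset (Fin n)) (ℓ : {i // i ∈ k} → Bool)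
    (z : {i // i ∉ k} → Bool) :
    (fun i : {i // i ∉ k} => mergeString k ℓ z i) = z := by
  funext i; simp [mergeString, i.2]

lemma mergeString_inside {n : ℕ} (k : Finset (Fin n)) (ℓ : {i // i ∈ k} → Bool)
    (z : {i // i ∉ k} → Bool) :
    (fun i : {i // i ∈ k} => mergeString k ℓ z i) = ℓ := by
  funext i; simp [mergeString, i.2]

def splitEquiv {n : ℕ} (k : Finset (Fin n)) :
    (Fin n → Bool) ≃ (({i // i ∈ k} → Bool) × ({i // i ∉ k} → Bool)) where
  toFun w := (fun i => w i, fun i => w i)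
  invFun p := mergeString k p.1 p.2
  left_inv w := by
    funext i
    by_cases h : i ∈ k <;> simp [mergeString, h]
  right_inv p := by
    cases p with
    | mk ℓ z => exact Prod.ext (mergeString_inside k ℓ z) (mergeString_restrict k ℓ z)

lemma myInnerSum {n : ℕ} (Ψ : (Fin n → Bool) → ℂ) (k : Finset (Fin n))
    (z : {i // i ∉ k} → Bool) (hp : 0 < pProb Ψ k z) :
    ∑ w' : Fin n → Bool, star (psiVec Ψ k z w') * Ψ w'
      = (Real.sqrt (pProb Ψ k z) : ℂ) := by
  have hs : Real.sqrt (pProb Ψ k z) ≠ 0 := (Real.sqrt_pos.mpr hp).ne'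
  rw [← Equiv.sum_comp (splitEquiv k).symm (fun w' => star (psiVec Ψ k z w') * Ψ w'),
    Fintype.sum_prod_type]
  have : ∀ (ℓ : {i // i ∈ k} → Bool) (z' : {i // i ∉ k} → Bool),
      star (psiVec Ψ k z ((splitEquiv k).symm (ℓ, z'))) * Ψ ((splitEquiv k).symm (ℓ, z'))
        = if z' = z then (starRingEnd ℂ) (Ψ (mergeString k ℓ z')) * Ψ (mergeString k ℓ z')
            / (Real.sqrt (pProb Ψ k z) : ℂ) else 0 := by
    intro ℓ z'
    simp only [splitEquiv, Equiv.coe_fn_symm_mk, psiVec, mergeString_restrict]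
    split
    · rw [div_eq_mul_inv, star_mul', star_inv₀, RCLike.star_def, Complex.conj_ofReal,
        div_eq_mul_inv]
      ring
    · simp
  simp only [this, Finset.sum_ite_eq' Finset.univ z, Finset.mem_univ, if_true]
  rw [← Finset.sum_div]
  have hnum : ∑ ℓ : {i // i ∈ k} → Bool,
      (starRingEnd ℂ) (Ψ (mergeString k ℓ z)) * Ψ (mergeString k ℓ z)
        = ((pProb Ψ k z : ℝ) : ℂ) := by
    rw [pProb]
    push_cast
    refine Finset.sum_congr rfl fun ℓ _ => ?_
    rw [← Complex.normSq_eq_conj_mul_self, Complex.normSq_eq_norm_sq]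
    norm_num
  rw [hnum]
  rw [show ((pProb Ψ k z : ℝ) : ℂ) = (Real.sqrt (pProb Ψ k z) : ℂ) * (Real.sqrt (pProb Ψ k z) : ℂ) by
    rw [← Complex.ofReal_mul, Real.mul_self_sqrt hp.le]]
  field_simp

/-- If `p(z_k) > 0` for all `k` of size `m` and all `z_k`, then `L|ψ⟩ = |ψ⟩`. -/
theorem Lop_fixes_psi (n m : ℕ) (hn : 1 ≤ n) (hm : 1 ≤ m) (hmn : m ≤ n)
    (Ψ : (Fin n → Bool) → ℂ)
    (hp : ∀ k ∈ Finset.univ.powersetCard m, ∀ z : {i // i ∉ k} → Bool, 0 < pProb Ψ k z) :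
    (Lop n m Ψ) *ᵥ Ψ = Ψ := by
  funext w
  have hc0 : (n.choose m : ℂ) ≠ 0 := Nat.cast_ne_zero.mpr (Nat.choose_pos hmn).ne'
  have hterm : ∀ k ∈ Finset.univ.powersetCard m, ∀ z : {i // i ∉ k} → Bool,
      ((Matrix.vecMulVec (psiVec Ψ k z) (star (psiVec Ψ k z))) *ᵥ Ψ) w
        = if (fun i : {i // i ∉ k} => w i) = z then Ψ w else 0 := by
    intro k hk z
    have hp' := hp k hk z
    have hs : Real.sqrt (pProb Ψ k z) ≠ 0 := (Real.sqrt_pos.mpr hp').ne'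
    simp only [Matrix.mulVec, dotProduct, Matrix.vecMulVec_apply, Pi.star_apply,
      mul_assoc, ← Finset.mul_sum]
    rw [myInnerSum Ψ k z hp']
    rw [psiVec]
    split
    · exact div_mul_cancel₀ _ (by exact_mod_cast hs)
    · simp
  have key : ((∑ k ∈ Finset.univ.powersetCard m, ∑ z : {i // i ∉ k} → Bool,
      Matrix.vecMulVec (psiVec Ψ k z) (star (psiVec Ψ k z))) *ᵥ Ψ) w
      = (n.choose m : ℂ) * Ψ w := by
    have hrw : ∀ (M : Matrix (Fin n → Bool) (Fin n → Bool) ℂ),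
        M *ᵥ Ψ = Matrix.mulVec.addMonoidHomLeft Ψ M := fun _ => rfl
    rw [hrw, map_sum]
    simp only [Finset.sum_apply]
    have : ∀ k ∈ Finset.univ.powersetCard m,
        (Matrix.mulVec.addMonoidHomLeft Ψ
          (∑ z : {i // i ∉ k} → Bool,
            Matrix.vecMulVec (psiVec Ψ k z) (star (psiVec Ψ k z)))) w = Ψ w := by
      intro k hk
      rw [map_sum]
      simp only [Finset.sum_apply, Matrix.mulVec.addMonoidHomLeft]
      calc ∑ z : {i // i ∉ k} → Bool,
            ((Matrix.vecMulVec (psiVec Ψ k z) (star (psiVec Ψ k z))) *ᵥ Ψ) w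
          = ∑ z : {i // i ∉ k} → Bool,
            if (fun i : {i // i ∉ k} => w i) = z then Ψ w else 0 :=
            Finset.sum_congr rfl fun z _ => hterm k hk z
        _ = Ψ w := by simp
    rw [Finset.sum_congr rfl this, Finset.sum_const, Finset.card_powersetCard,
      Finset.card_univ, Fintype.card_fin]
    simp [mul_comm]
  rw [Lop, Matrix.smul_mulVec]
  simp only [Pi.smul_apply, smul_eq_mul, key]
  field_simp
end

section
/- Let L be a Hermitian operator on ℂ^d with 0 ⪯ L ⪯ I, let ψ ∈ ℂ^d be a unit vector with Lψ = ψ, and let τ ≥ 1 be such that ⟨φ|L|φ⟩ ≤ 1 − 1/τ for every unit vector φ orthogonal to ψ (i.e., the spectral gap of L at its top eigenvalue 1, restricted to the orthogonal complement of ψ, is at least 1/τ). Let ρ be any density matrix on ℂ^d (positive semidefinite with trace 1) and let ε ≥ 0. Then: (i) if tr(Lρ) ≥ 1 − ε, then ⟨ψ|ρ|ψ⟩ ≥ 1 − τε; and (ii) if ⟨ψ|ρ|ψ⟩ ≥ 1 − ε, then tr(Lρ) ≥ 1 − ε. -/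
open Matrix
open scoped ComplexOrder

lemma trace_mul_psd_nonneg' {d : ℕ} {A B : Matrix (Fin d) (Fin d) ℂ}
    (hA : A.PosSemidef) (hB : B.PosSemidef) : 0 ≤ ((A * B).trace).re := by
  open scoped MatrixOrder in
  obtain ⟨X, hX⟩ := CStarAlgebra.nonneg_iff_eq_star_mul_self.mp hA.nonneg
  open scoped MatrixOrder in
  obtain ⟨Y, hY⟩ := CStarAlgebra.nonneg_iff_eq_star_mul_self.mp hB.nonneg
  rw [star_eq_conjTranspose] at hX hY
  have h : (A * B).trace = ((X * Yᴴ) * (X * Yᴴ)ᴴ).trace := by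
    rw [hX, hY, conjTranspose_mul, conjTranspose_conjTranspose,
      show Xᴴ * X * (Yᴴ * Y) = Xᴴ * (X * Yᴴ * Y) by noncomm_ring,
      Matrix.trace_mul_comm, Matrix.mul_assoc]
  rw [h]
  set M := X * Yᴴ
  have h2 : ((M * Mᴴ).trace) = ∑ i, ∑ j, M i j * star (M i j) := by
    simp [Matrix.trace, Matrix.mul_apply, Matrix.conjTranspose_apply, Matrix.diag]
  rw [h2, Complex.re_sum]
  refine Finset.sum_nonneg fun i _ => ?_
  rw [Complex.re_sum]
  refine Finset.sum_nonneg fun j _ => ?_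
  simp [Complex.star_def, Complex.mul_conj, Complex.normSq_nonneg]

lemma quad_expand' {d : ℕ} (M : Matrix (Fin d) (Fin d) ℂ) (ψ w : Fin d → ℂ) (c : ℂ)
    (hrow : star ψ ᵥ* M = star ψ) (hMψ : M *ᵥ ψ = ψ)
    (hψ1 : star ψ ⬝ᵥ ψ = 1) (hw : star ψ ⬝ᵥ w = 0) :
    star (c • ψ + w) ⬝ᵥ (M *ᵥ (c • ψ + w)) = star c * c + star w ⬝ᵥ (M *ᵥ w) := by
  have h1 : star ψ ⬝ᵥ (M *ᵥ w) = 0 := by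
    rw [Matrix.dotProduct_mulVec, hrow, hw]
  have h2 : star w ⬝ᵥ ψ = 0 := by
    rw [star_dotProduct, hw, star_zero]
  rw [Matrix.mulVec_add, Matrix.mulVec_smul, hMψ, star_add, star_smul,
    add_dotProduct, dotProduct_add, dotProduct_add, dotProduct_smul, dotProduct_smul,
    smul_dotProduct, smul_dotProduct, hψ1, h1, h2]
  simp [mul_comm]

/-- If `L` is Hermitian with `0 ⪯ L ⪯ I`, `ψ` is a unit eigenvector of `L` with eigenvalue `1`,
the quadratic form of `L` is at most `1 - 1/τ` on unit vectors orthogonal to `ψ`, and `ρ` is a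
density matrix, then: (i) `tr(Lρ) ≥ 1 - ε` implies `⟨ψ|ρ|ψ⟩ ≥ 1 - τε`, and
(ii) `⟨ψ|ρ|ψ⟩ ≥ 1 - ε` implies `tr(Lρ) ≥ 1 - ε`. -/
theorem shadow_overlap_vs_fidelity {d : ℕ} (L ρ : Matrix (Fin d) (Fin d) ℂ)
    (hL : L.IsHermitian) (hL0 : L.PosSemidef) (hL1 : ((1 : Matrix (Fin d) (Fin d) ℂ) - L).PosSemidef)
    (ψ : Fin d → ℂ) (hψ : ∑ i, ‖ψ i‖ ^ 2 = 1) (hLψ : L *ᵥ ψ = ψ)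
    (τ : ℝ) (hτ : 1 ≤ τ)
    (hgap : ∀ φ : Fin d → ℂ, (∑ i, ‖φ i‖ ^ 2 = 1) → (star ψ ⬝ᵥ φ = 0) →
      (star φ ⬝ᵥ (L *ᵥ φ)).re ≤ 1 - 1 / τ)
    (hρ : ρ.PosSemidef) (hρtr : ρ.trace = 1)
    (ε : ℝ) (hε : 0 ≤ ε) :
    (((L * ρ).trace).re ≥ 1 - ε → (star ψ ⬝ᵥ (ρ *ᵥ ψ)).re ≥ 1 - τ * ε) ∧
    ((star ψ ⬝ᵥ (ρ *ᵥ ψ)).re ≥ 1 - ε → ((L * ρ).trace).re ≥ 1 - ε) := by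
  have hτ0 : (0:ℝ) < τ := lt_of_lt_of_le one_pos hτ
  set P : Matrix (Fin d) (Fin d) ℂ := vecMulVec ψ (star ψ) with hPdef
  -- basic facts
  have hψ1 : star ψ ⬝ᵥ ψ = 1 := by
    have : star ψ ⬝ᵥ ψ = ((∑ i, ‖ψ i‖ ^ 2 : ℝ) : ℂ) := by
      push_cast
      simp [dotProduct, Complex.conj_mul', Complex.sq_norm, ← Complex.normSq_eq_norm_sq,
        Complex.normSq_eq_conj_mul_self]
    rw [this, hψ]; norm_num
  have hPmulVec : ∀ v : Fin d → ℂ, P *ᵥ v = (star ψ ⬝ᵥ v) • ψ := by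
    intro v; ext i
    simp [hPdef, mulVec, vecMulVec_apply, dotProduct, Finset.mul_sum, Finset.sum_mul]
    congr 1; ext j; ring
  have hPvecMul : ∀ u : Fin d → ℂ, u ᵥ* P = (u ⬝ᵥ ψ) • star ψ := by
    intro u; ext j
    simp [hPdef, vecMul, vecMulVec_apply, dotProduct, Finset.sum_mul]
    congr 1; ext i; ring
  have hPherm : P.IsHermitian := by
    ext i j
    simp [hPdef, Matrix.conjTranspose_apply, vecMulVec_apply, mul_comm]
  have hProw : star ψ ᵥ* P = star ψ := by rw [hPvecMul, star_dotProduct, hψ1]; simp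
  have hPψ : P *ᵥ ψ = ψ := by rw [hPmulVec, hψ1, one_smul]
  have hLrow : star ψ ᵥ* L = star ψ := by
    have := Matrix.star_mulVec (M := L) (v := ψ)
    rw [hLψ, hL.eq] at this
    exact this.symm
  have hOnerow : star ψ ᵥ* (1 : Matrix (Fin d) (Fin d) ℂ) = star ψ := Matrix.vecMul_one _
  have hOneψ : (1 : Matrix (Fin d) (Fin d) ℂ) *ᵥ ψ = ψ := Matrix.one_mulVec _
  -- decomposition facts for any x
  have decomp : ∀ x : Fin d → ℂ, ∃ (c : ℂ) (w : Fin d → ℂ), x = c • ψ + w ∧ star ψ ⬝ᵥ w = 0 := by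
    intro x
    refine ⟨star ψ ⬝ᵥ x, x - (star ψ ⬝ᵥ x) • ψ, by abel, ?_⟩
    rw [dotProduct_sub, dotProduct_smul, hψ1]
    simp
  -- L - P is PSD
  have psd1 : (L - P).PosSemidef := by
    refine Matrix.PosSemidef.of_dotProduct_mulVec_nonneg (hL.sub hPherm) fun x => ?_
    obtain ⟨c, w, hx, hw⟩ := decomp x
    rw [hx, Matrix.sub_mulVec, dotProduct_sub,
      quad_expand' L ψ w c hLrow hLψ hψ1 hw,
      quad_expand' P ψ w c hProw hPψ hψ1 hw]
    have : star w ⬝ᵥ (P *ᵥ w) = 0 := by rw [hPmulVec, hw, zero_smul, dotProduct_zero]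
    rw [this]
    have := hL0.dotProduct_mulVec_nonneg w
    simpa using this
  -- τ•(1-L) - (1-P) is PSD
  have psd2 : (((τ:ℂ) • ((1 : Matrix (Fin d) (Fin d) ℂ) - L)) - ((1 : Matrix (Fin d) (Fin d) ℂ) - P)).PosSemidef := by
    refine Matrix.PosSemidef.of_dotProduct_mulVec_nonneg ?_ ?_
    · apply Matrix.IsHermitian.sub _ (isHermitian_one.sub hPherm)
      rw [Matrix.IsHermitian, Matrix.conjTranspose_smul]
      rw [(isHermitian_one.sub hL).eq]
      simp [Complex.star_def, Complex.conj_ofReal]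
    · intro x
      obtain ⟨c, w, hx, hw⟩ := decomp x
      rw [hx, Matrix.sub_mulVec, dotProduct_sub, Matrix.smul_mulVec, dotProduct_smul,
        Matrix.sub_mulVec, dotProduct_sub, Matrix.sub_mulVec, dotProduct_sub,
        quad_expand' L ψ w c hLrow hLψ hψ1 hw,
        quad_expand' P ψ w c hProw hPψ hψ1 hw,
        quad_expand' 1 ψ w c hOnerow hOneψ hψ1 hw]
      have hPw : star w ⬝ᵥ (P *ᵥ w) = 0 := by rw [hPmulVec, hw, zero_smul, dotProduct_zero]
      rw [hPw, Matrix.one_mulVec]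
      -- now goal: 0 ≤ τ • ((|c|²+qw) - (|c|²+qLw)) - ((|c|²+qw) - (|c|²+0))
      set a : ℝ := ∑ i, ‖w i‖ ^ 2 with ha
      have ha0 : 0 ≤ a := Finset.sum_nonneg fun i _ => sq_nonneg _
      have hqw : star w ⬝ᵥ w = (a : ℂ) := by
        push_cast
        simp [ha, dotProduct, Complex.conj_mul', Complex.sq_norm, ← Complex.normSq_eq_norm_sq,
          Complex.normSq_eq_conj_mul_self]
      have hqL0 : 0 ≤ star w ⬝ᵥ (L *ᵥ w) := hL0.dotProduct_mulVec_nonneg w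
      set b : ℝ := (star w ⬝ᵥ (L *ᵥ w)).re with hb
      have hb0 : 0 ≤ b := (Complex.le_def.mp hqL0).1
      have hqL : star w ⬝ᵥ (L *ᵥ w) = (b : ℂ) := by
        have him : (star w ⬝ᵥ (L *ᵥ w)).im = 0 := ((Complex.le_def.mp hqL0).2).symm
        exact Complex.ext (by simp [hb]) (by simp [him])
      have key : b ≤ a * (1 - 1/τ) := by
        rcases eq_or_lt_of_le ha0 with haz | hap
        · -- a = 0 ⇒ w = 0
          have hw0 : w = 0 := by
            funext i
            have : ‖w i‖ ^ 2 = 0 := by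
              have := Finset.sum_eq_zero_iff_of_nonneg (fun i _ => sq_nonneg ‖w i‖) |>.mp haz.symm i (Finset.mem_univ i)
              exact this
            simpa using this
          have hb' : b = 0 := by rw [hb, hw0]; simp
          simp [hb', ← haz]
        · set s : ℝ := Real.sqrt a with hs
          have hsp : 0 < s := Real.sqrt_pos.mpr hap
          have hs2 : s ^ 2 = a := Real.sq_sqrt ha0
          set φ : Fin d → ℂ := ((s:ℂ))⁻¹ • w with hφ
          have hφnorm : ∑ i, ‖φ i‖ ^ 2 = 1 := by
            simp only [hφ, Pi.smul_apply, smul_eq_mul, norm_mul, mul_pow]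
            rw [← Finset.mul_sum, ← ha]
            simp only [norm_inv, Complex.norm_real, Real.norm_eq_abs, abs_of_pos hsp]
            field_simp
            rw [hs2]
          have hφorth : star ψ ⬝ᵥ φ = 0 := by
            simp only [hφ, dotProduct_smul, hw, smul_zero]
          have hgapφ := hgap φ hφnorm hφorth
          have hquad : star φ ⬝ᵥ (L *ᵥ φ) = ((s:ℂ))⁻¹ * ((s:ℂ))⁻¹ * (b:ℂ) := by
            simp only [hφ, Matrix.mulVec_smul, dotProduct_smul, smul_dotProduct, star_smul]
            rw [hqL]
            simp [Complex.star_def, Complex.conj_ofReal]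
            ring
          rw [hquad] at hgapφ
          have hre : ((s:ℂ))⁻¹ * ((s:ℂ))⁻¹ * (b:ℂ) = ((b / a : ℝ) : ℂ) := by
            have h1 : b / (s * s) = b / a := by rw [← hs2, sq]
            rw [← h1]
            push_cast
            ring
          rw [hre, Complex.ofReal_re] at hgapφ
          calc b = (b / a) * a := by field_simp
          _ ≤ (1 - 1/τ) * a := by apply mul_le_mul_of_nonneg_right hgapφ ha0
          _ = a * (1 - 1/τ) := by ring
      -- finish: the complex expression equals the real number τ*(a-b) - (a-0)... 
      have : (τ:ℂ) • (star c * c + star w ⬝ᵥ w - (star c * c + (b:ℂ))) -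
          (star c * c + star w ⬝ᵥ w - (star c * c + 0)) = ((τ * (a - b) - a : ℝ) : ℂ) := by
        rw [hqw]
        push_cast
        simp [smul_eq_mul]
      rw [hqL, this]
      rw [Complex.zero_le_real]
      have expand : τ * (a * (1 - 1/τ)) = τ * a - a := by
        field_simp
      linarith [mul_le_mul_of_nonneg_left key hτ0.le, expand]
  -- trace identities
  have traceP : (P * ρ).trace = star ψ ⬝ᵥ (ρ *ᵥ ψ) := by
    simp only [Matrix.trace, Matrix.diag, Matrix.mul_apply, hPdef, vecMulVec_apply,
      dotProduct, Matrix.mulVec, Pi.star_apply]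
    rw [Finset.sum_comm]
    congr 1; ext j
    rw [Finset.mul_sum]
    congr 1; ext i
    simp [dotProduct]
    ring
  have h1 := trace_mul_psd_nonneg' psd1 hρ
  have h2 := trace_mul_psd_nonneg' psd2 hρ
  rw [Matrix.sub_mul, Matrix.trace_sub, traceP] at h1
  have h1' : (star ψ ⬝ᵥ (ρ *ᵥ ψ)).re ≤ ((L * ρ).trace).re := by
    have := h1
    simp [Complex.sub_re] at this
    linarith
  rw [Matrix.sub_mul, Matrix.smul_mul, Matrix.sub_mul, Matrix.sub_mul, Matrix.one_mul,
    Matrix.trace_sub, Matrix.trace_smul, Matrix.trace_sub, Matrix.trace_sub, traceP, hρtr] at h2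
  have h2' : 0 ≤ τ * (1 - ((L * ρ).trace).re) - (1 - (star ψ ⬝ᵥ (ρ *ᵥ ψ)).re) := by
    simpa [smul_eq_mul, Complex.mul_re, Complex.sub_re, Complex.sub_im, Complex.one_re,
      Complex.one_im, Complex.ofReal_re, Complex.ofReal_im] using h2
  constructor
  · intro ht
    nlinarith [h2', hτ0]
  · intro hf
    linarith [h1']
end

section
/- Let S be the set of six unit vectors in ℂ² consisting of the eigenvectors of the three Pauli matrices: (1/√2)(1,1), (1/√2)(1,−1), (1/√2)(1,i), (1/√2)(1,−i), (1,0), and (0,1). Then for every complex 2×2 matrix ρ: (1/3)·Σ_{s∈S} ⟨s|ρ|s⟩·(3|s⟩⟨s| − I) = ρ. -/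
open Matrix

/-- The six Pauli eigenvectors in `ℂ²`: `(1/√2)(1,1)`, `(1/√2)(1,−1)`, `(1/√2)(1,i)`,
`(1/√2)(1,−i)`, `(1,0)`, `(0,1)`. -/
noncomputable def pauliEig : Fin 6 → Fin 2 → ℂ :=
  ![![((Real.sqrt 2 : ℂ))⁻¹, ((Real.sqrt 2 : ℂ))⁻¹],
    ![((Real.sqrt 2 : ℂ))⁻¹, -((Real.sqrt 2 : ℂ))⁻¹],
    ![((Real.sqrt 2 : ℂ))⁻¹, ((Real.sqrt 2 : ℂ))⁻¹ * Complex.I],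
    ![((Real.sqrt 2 : ℂ))⁻¹, -(((Real.sqrt 2 : ℂ))⁻¹ * Complex.I)],
    ![1, 0],
    ![0, 1]]

set_option maxHeartbeats 2000000 in
/-- The single-qubit random Pauli classical shadow is unbiased:
`(1/3)·Σ_{s ∈ S} ⟨s|ρ|s⟩·(3|s⟩⟨s| − I) = ρ` for every `2×2` matrix `ρ`, where `S` is the set of
the six Pauli eigenvectors. -/
theorem pauli_shadow_unbiased (ρ : Matrix (Fin 2) (Fin 2) ℂ) :
    (1 / 3 : ℂ) • ∑ j : Fin 6,
        (star (pauliEig j) ⬝ᵥ (ρ *ᵥ pauliEig j)) •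
          ((3 : ℂ) • Matrix.vecMulVec (pauliEig j) (star (pauliEig j)) - 1) = ρ := by
  have h2 : ((Real.sqrt 2 : ℂ))⁻¹ ^ 2 = 2⁻¹ := by
    rw [← Complex.ofReal_inv, ← Complex.ofReal_pow]
    norm_num [Real.sq_sqrt]
  have h4 : ((Real.sqrt 2 : ℂ))⁻¹ ^ 4 = 4⁻¹ := by
    rw [show (4:ℕ) = 2*2 by norm_num, pow_mul, h2]; norm_num
  have hs : (starRingEnd ℂ) ((Real.sqrt 2 : ℂ))⁻¹ = ((Real.sqrt 2 : ℂ))⁻¹ := by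
    rw [← Complex.ofReal_inv, Complex.conj_ofReal]
  have e0 : pauliEig 0 = ![((Real.sqrt 2 : ℂ))⁻¹, ((Real.sqrt 2 : ℂ))⁻¹] := rfl
  have e1 : pauliEig 1 = ![((Real.sqrt 2 : ℂ))⁻¹, -((Real.sqrt 2 : ℂ))⁻¹] := rfl
  have e2 : pauliEig 2 = ![((Real.sqrt 2 : ℂ))⁻¹, ((Real.sqrt 2 : ℂ))⁻¹ * Complex.I] := rfl
  have e3 : pauliEig 3 = ![((Real.sqrt 2 : ℂ))⁻¹, -(((Real.sqrt 2 : ℂ))⁻¹ * Complex.I)] := rfl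
  have e4 : pauliEig 4 = ![1, 0] := rfl
  have e5 : pauliEig 5 = ![0, 1] := rfl
  ext i j
  rw [Fin.sum_univ_six, e0, e1, e2, e3, e4, e5]
  fin_cases i <;> fin_cases j <;>
    · simp only [dotProduct, mulVec, vecMulVec, Matrix.one_apply, Matrix.sub_apply,
        Matrix.smul_apply, Fin.sum_univ_two, Matrix.add_apply, Pi.star_apply, Complex.star_def, hs,
        map_neg, _root_.map_mul, Complex.conj_I, Matrix.cons_val_zero, Matrix.cons_val_one,
        Matrix.head_cons, Matrix.of_apply, smul_eq_mul, _root_.map_one, _root_.map_zero,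
        if_true, if_false, Fin.isValue]
      norm_num
      ring_nf
      simp only [h2, h4, Complex.I_sq, Complex.I_pow_four]
      ring_nf
end

section
/- Let L be a Hermitian operator on ℂ^d with 0 ⪯ L ⪯ I, let ψ ∈ ℂ^d be a unit vector with Lψ = ψ, let τ ≥ 1 be such that ⟨φ|L|φ⟩ ≤ 1 − 1/τ for every unit vector φ orthogonal to ψ, and let ρ be a density matrix on ℂ^d. Let m ≥ 1, ε > 0, δ ∈ (0,1), and let ω₁, …, ω_T be independent, identically distributed real random variables with E[ω₁] = tr(Lρ) and |ω_t| ≤ 2^{2m−1} almost surely. If T ≥ 2^{4m+3}·(τ²/ε²)·ln(2/δ) and the acceptance threshold is ω_threshold = 1 − (3ε)/(4τ), then: (i) if ⟨ψ|ρ|ψ⟩ < 1 − ε, the probability that (1/T)·Σ_t ω_t ≥ ω_threshold is at most δ; and (ii) if ⟨ψ|ρ|ψ⟩ ≥ 1 − ε/(2τ), the probability that (1/T)·Σ_t ω_t < ω_threshold is at most δ. -/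
open Matrix MeasureTheory ProbabilityTheory
open scoped ComplexOrder

set_option linter.unusedSectionVars false

section prob
open Real


lemma my_hoeffding_pt {p : ℝ} (hp0 : 0 ≤ p) (hp1 : p ≤ 1) (u : ℝ) :
    p * exp u + (1 - p) * exp (-u) ≤ exp ((2*p - 1)*u + u^2/2) := by
  rcases eq_or_lt_of_le hp0 with h0 | h0
  · rw [← h0]
    have : exp (-u) ≤ exp ((2*(0:ℝ) - 1)*u + u^2/2) := by
      apply exp_le_exp.2; nlinarith [sq_nonneg u]
    simpa using this
  rcases eq_or_lt_of_le hp1 with h1 | h1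
  · rw [h1]
    have : exp u ≤ exp ((2*(1:ℝ) - 1)*u + u^2/2) := by
      apply exp_le_exp.2; nlinarith [sq_nonneg u]
    simpa using this
  -- now 0 < p < 1
  set g : ℝ → ℝ := fun u => p * exp u + (1 - p) * exp (-u) with hgdef
  have gpos : ∀ u, 0 < g u := fun u => by
    have := exp_pos u; have := exp_pos (-u); simp only [hgdef]; nlinarith
  have hg : ∀ u, HasDerivAt g (p * exp u - (1 - p) * exp (-u)) u := by
    intro u
    have h1 := (Real.hasDerivAt_exp u).const_mul p
    have h2 := (((hasDerivAt_neg u)).exp).const_mul (1 - p)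
    have := h1.add h2
    refine this.congr_deriv ?_
    ring
  set g' : ℝ → ℝ := fun u => p * exp u - (1 - p) * exp (-u) with hg'def
  have hg' : ∀ u, HasDerivAt g' (g u) u := by
    intro u
    have h1 := (Real.hasDerivAt_exp u).const_mul p
    have h2 := (((hasDerivAt_neg u)).exp).const_mul (1 - p)
    have := h1.sub h2
    refine this.congr_deriv ?_
    simp only [hgdef]; ring
  set h1f : ℝ → ℝ := fun u => (2*p - 1) + u - g' u / g u with h1def
  have hh1 : ∀ u, HasDerivAt h1f (g' u ^ 2 / g u ^ 2) u := by
    intro u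
    have hdiv := (hg' u).div (hg u) (gpos u).ne'
    have hlin : HasDerivAt (fun u : ℝ => (2*p - 1) + u) 1 u := by
      simpa using (hasDerivAt_id u).const_add (2*p-1)
    have := hlin.sub hdiv
    refine this.congr_deriv ?_
    have hgu := (gpos u).ne'
    field_simp
    ring
  have h1mono : Monotone h1f := by
    refine monotone_of_deriv_nonneg (fun u => (hh1 u).differentiableAt) (fun u => ?_)
    rw [(hh1 u).deriv]
    positivity
  have h1zero : h1f 0 = 0 := by
    simp only [h1def, hg'def, hgdef, neg_zero, exp_zero, mul_one]
    have : p - (1 - p) = 2*p - 1 := by ring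
    rw [this]
    have : p + (1 - p) = 1 := by ring
    rw [this, div_one]
    ring
  set h : ℝ → ℝ := fun u => (2*p - 1)*u + u^2/2 - Real.log (g u) with hdef
  have hh : ∀ u, HasDerivAt h (h1f u) u := by
    intro u
    have hlog := (hg u).log (gpos u).ne'
    have hpoly : HasDerivAt (fun u : ℝ => (2*p - 1)*u + u^2/2) ((2*p - 1) + u) u := by
      have := ((hasDerivAt_id u).const_mul (2*p-1)).add ((hasDerivAt_pow 2 u).div_const 2)
      refine this.congr_deriv ?_
      norm_num
    exact hpoly.sub hlog
  have hzero : h 0 = 0 := by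
    simp only [hdef, hgdef, neg_zero, exp_zero, mul_one]
    have : p + (1 - p) = 1 := by ring
    rw [this, Real.log_one]
    ring
  have hnn : ∀ u, 0 ≤ h u := by
    intro u
    rcases le_total 0 u with hu | hu
    · have hmono : MonotoneOn h (Set.Ici 0) := by
        refine monotoneOn_of_deriv_nonneg (convex_Ici 0) ?_ ?_ ?_
        · exact (fun x _ => ((hh x).differentiableAt).continuousAt.continuousWithinAt)
        · exact fun x _ => ((hh x).differentiableAt).differentiableWithinAt
        · intro x hx
          rw [(hh x).deriv, ← h1zero]
          exact h1mono (le_of_lt (by simpa using hx))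
      have := hmono (Set.self_mem_Ici) (by exact hu) hu
      rwa [hzero] at this
    · have hanti : AntitoneOn h (Set.Iic 0) := by
        refine antitoneOn_of_deriv_nonpos (convex_Iic 0) ?_ ?_ ?_
        · exact (fun x _ => ((hh x).differentiableAt).continuousAt.continuousWithinAt)
        · exact fun x _ => ((hh x).differentiableAt).differentiableWithinAt
        · intro x hx
          rw [(hh x).deriv, ← h1zero]
          exact h1mono (le_of_lt (by simpa using hx))
      have := hanti (by exact hu) (Set.self_mem_Iic) hu
      rwa [hzero] at this
  have hlogle : Real.log (g u) ≤ (2*p - 1)*u + u^2/2 := by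
    have := hnn u
    simp only [hdef] at this
    linarith
  calc g u = exp (Real.log (g u)) := (exp_log (gpos u)).symm
    _ ≤ exp ((2*p - 1)*u + u^2/2) := exp_le_exp.2 hlogle


variable {Ω : Type*} [MeasurableSpace Ω] {μ : Measure Ω} [IsProbabilityMeasure μ]

lemma my_int_bdd {Y : Ω → ℝ} (hY : Measurable Y) {B : ℝ} (hb : ∀ᵐ x ∂μ, |Y x| ≤ B) :
    Integrable Y μ := by
  refine Integrable.mono' (integrable_const B) hY.aestronglyMeasurable ?_
  filter_upwards [hb] with x hx
  simpa [Real.norm_eq_abs] using hx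

lemma my_int_exp {Y : Ω → ℝ} (hY : Measurable Y) {B : ℝ} (hb : ∀ᵐ x ∂μ, |Y x| ≤ B) (s : ℝ) :
    Integrable (fun x => exp (s * Y x)) μ := by
  refine Integrable.mono' (integrable_const (exp (|s| * B))) ((hY.const_mul s).exp).aestronglyMeasurable ?_
  filter_upwards [hb] with x hx
  rw [Real.norm_eq_abs, abs_of_pos (exp_pos _), exp_le_exp]
  calc s * Y x ≤ |s * Y x| := le_abs_self _
    _ = |s| * |Y x| := abs_mul _ _
    _ ≤ |s| * B := by nlinarith [abs_nonneg s, abs_nonneg (Y x), hx]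

lemma my_mgf_bound {Y : Ω → ℝ} (hY : Measurable Y) {B : ℝ} (hB : 0 < B)
    (hb : ∀ᵐ x ∂μ, |Y x| ≤ B) (s : ℝ) :
    mgf Y μ s ≤ exp (s * (∫ x, Y x ∂μ) + s^2 * B^2 / 2) := by
  set m0 : ℝ := ∫ x, Y x ∂μ with hm0def
  have hYint : Integrable Y μ := my_int_bdd hY hb
  have hm0B : |m0| ≤ B := by
    calc |m0| ≤ ∫ x, |Y x| ∂μ := by
          simpa [hm0def, Real.norm_eq_abs] using norm_integral_le_integral_norm (μ := μ) Y
      _ ≤ ∫ _x, B ∂μ := integral_mono_ae hYint.abs (integrable_const B) hb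
      _ = B := by simp
  obtain ⟨hm1, hm2⟩ := abs_le.1 hm0B
  set c1 : ℝ := (exp (s*B) + exp (-(s*B)))/2 with hc1
  set c2 : ℝ := (exp (s*B) - exp (-(s*B)))/(2*B) with hc2
  have hpt : ∀ᵐ x ∂μ, exp (s * Y x) ≤ c1 + c2 * Y x := by
    filter_upwards [hb] with x hx
    obtain ⟨hx1, hx2⟩ := abs_le.1 hx
    have ha : (0:ℝ) ≤ (B + Y x)/(2*B) := by
      apply div_nonneg (by linarith) (by linarith)
    have hb' : (0:ℝ) ≤ (B - Y x)/(2*B) := by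
      apply div_nonneg (by linarith) (by linarith)
    have hab : (B + Y x)/(2*B) + (B - Y x)/(2*B) = 1 := by
      field_simp
      ring
    have hcvx := convexOn_exp.2 (Set.mem_univ (s*B)) (Set.mem_univ (-(s*B))) ha hb' hab
    have harg : ((B + Y x)/(2*B)) • (s*B) + ((B - Y x)/(2*B)) • (-(s*B)) = s * Y x := by
      simp only [smul_eq_mul]
      field_simp [hB.ne']
      ring
    rw [harg] at hcvx
    refine hcvx.trans_eq ?_
    simp only [smul_eq_mul, hc1, hc2]
    field_simp
    ring
  have hexpint : Integrable (fun x => exp (s * Y x)) μ := my_int_exp hY hb s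
  have hrhsint : Integrable (fun x => c1 + c2 * Y x) μ :=
    (integrable_const c1).add (hYint.const_mul c2)
  have step1 : mgf Y μ s ≤ c1 + c2 * m0 := by
    have := integral_mono_ae hexpint hrhsint hpt
    rwa [integral_add (integrable_const c1) (hYint.const_mul c2), integral_const,
      integral_const_mul, probReal_univ, smul_eq_mul, one_mul] at this
  set p : ℝ := (B + m0)/(2*B) with hp
  have hp0 : 0 ≤ p := by apply div_nonneg (by linarith) (by linarith)
  have hp1 : p ≤ 1 := by
    rw [hp, div_le_one (by linarith)]; linarith
  have heq1 : c1 + c2 * m0 = p * exp (s*B) + (1 - p) * exp (-(s*B)) := by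
    simp only [hc1, hc2, hp]
    field_simp
    ring
  have heq2 : (2*p - 1)*(s*B) + (s*B)^2/2 = s * m0 + s^2 * B^2 / 2 := by
    simp only [hp]
    field_simp
    ring
  calc mgf Y μ s ≤ c1 + c2 * m0 := step1
    _ = p * exp (s*B) + (1 - p) * exp (-(s*B)) := heq1
    _ ≤ exp ((2*p - 1)*(s*B) + (s*B)^2/2) := my_hoeffding_pt hp0 hp1 (s*B)
    _ = exp (s * m0 + s^2 * B^2 / 2) := by rw [heq2]


variable {Ω : Type*} [MeasurableSpace Ω] {μ : Measure Ω} [IsProbabilityMeasure μ]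

lemma my_chernoff_core {T : ℕ} (ω : Fin T → Ω → ℝ) (hmeas : ∀ t, Measurable (ω t))
    (hindep : iIndepFun ω μ) {B : ℝ} (hB : 0 < B)
    (hb : ∀ t, ∀ᵐ x ∂μ, |ω t x| ≤ B) {m0 : ℝ} (hm : ∀ t, ∫ x, ω t x ∂μ = m0)
    (s θ : ℝ) (hexp : -s*θ + s*m0 + s^2*B^2/2 ≤ -(s^2*B^2/2)) :
    (if 0 ≤ s then (μ {x | (T:ℝ) * θ ≤ ∑ t, ω t x}).toReal
     else (μ {x | ∑ t, ω t x ≤ (T:ℝ) * θ}).toReal) ≤ exp (-(T:ℝ) * (s^2*B^2/2)) := by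
  have hint : ∀ i, Integrable (fun x => exp (s * ω i x)) μ :=
    fun i => my_int_exp (hmeas i) (hb i) s
  have hintsum : Integrable (fun x => exp (s * (∑ i, ω i) x)) μ :=
    hindep.integrable_exp_mul_sum hmeas (fun i _ => hint i)
  have hmgf : mgf (∑ i, ω i) μ s ≤ exp ((T:ℝ) * (s*m0 + s^2*B^2/2)) := by
    rw [hindep.mgf_sum hmeas Finset.univ]
    calc ∏ i, mgf (ω i) μ s ≤ ∏ _i : Fin T, exp (s*m0 + s^2*B^2/2) := by
          refine Finset.prod_le_prod (fun i _ => mgf_nonneg) (fun i _ => ?_)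
          simpa [hm i] using my_mgf_bound (hmeas i) hB (hb i) s
      _ = exp ((T:ℝ) * (s*m0 + s^2*B^2/2)) := by
          rw [Finset.prod_const, Finset.card_univ, Fintype.card_fin, ← Real.exp_nat_mul]
  have hexpo : -s * ((T:ℝ)*θ) + (T:ℝ) * (s*m0 + s^2*B^2/2) ≤ -(T:ℝ) * (s^2*B^2/2) := by
    have : -s * ((T:ℝ)*θ) + (T:ℝ) * (s*m0 + s^2*B^2/2)
        = (T:ℝ) * (-s*θ + s*m0 + s^2*B^2/2) := by ring
    rw [this]
    have hT0 : (0:ℝ) ≤ (T:ℝ) := Nat.cast_nonneg T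
    nlinarith [mul_le_mul_of_nonneg_left hexp hT0]
  split_ifs with hs
  · have hch := measure_ge_le_exp_mul_mgf (μ := μ) (X := ∑ i, ω i) ((T:ℝ)*θ) hs hintsum
    have hset : {x : Ω | (T:ℝ)*θ ≤ (∑ i, ω i) x} = {x | (T:ℝ)*θ ≤ ∑ t, ω t x} := by
      ext x; simp [Finset.sum_apply]
    rw [hset] at hch
    calc (μ {x | (T:ℝ)*θ ≤ ∑ t, ω t x}).toReal
        ≤ exp (-s * ((T:ℝ)*θ)) * mgf (∑ i, ω i) μ s := hch
      _ ≤ exp (-s * ((T:ℝ)*θ)) * exp ((T:ℝ) * (s*m0 + s^2*B^2/2)) := by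
          exact mul_le_mul_of_nonneg_left hmgf (exp_pos _).le
      _ = exp (-s * ((T:ℝ)*θ) + (T:ℝ) * (s*m0 + s^2*B^2/2)) := (Real.exp_add _ _).symm
      _ ≤ exp (-(T:ℝ) * (s^2*B^2/2)) := exp_le_exp.2 hexpo
  · have hs' : s ≤ 0 := le_of_not_ge hs
    have hch := measure_le_le_exp_mul_mgf (μ := μ) (X := ∑ i, ω i) ((T:ℝ)*θ) hs' hintsum
    have hset : {x : Ω | (∑ i, ω i) x ≤ (T:ℝ)*θ} = {x | ∑ t, ω t x ≤ (T:ℝ)*θ} := by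
      ext x; simp [Finset.sum_apply]
    rw [hset] at hch
    calc (μ {x | ∑ t, ω t x ≤ (T:ℝ)*θ}).toReal
        ≤ exp (-s * ((T:ℝ)*θ)) * mgf (∑ i, ω i) μ s := hch
      _ ≤ exp (-s * ((T:ℝ)*θ)) * exp ((T:ℝ) * (s*m0 + s^2*B^2/2)) := by
          exact mul_le_mul_of_nonneg_left hmgf (exp_pos _).le
      _ = exp (-s * ((T:ℝ)*θ) + (T:ℝ) * (s*m0 + s^2*B^2/2)) := (Real.exp_add _ _).symm
      _ ≤ exp (-(T:ℝ) * (s^2*B^2/2)) := exp_le_exp.2 hexpo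


variable {Ω : Type*} [MeasurableSpace Ω] {μ : Measure Ω} [IsProbabilityMeasure μ]

lemma my_chernoff_ge {T : ℕ} (ω : Fin T → Ω → ℝ) (hmeas : ∀ t, Measurable (ω t))
    (hindep : iIndepFun ω μ) {B : ℝ} (hB : 0 < B)
    (hb : ∀ t, ∀ᵐ x ∂μ, |ω t x| ≤ B) {m0 : ℝ} (hm : ∀ t, ∫ x, ω t x ∂μ = m0)
    {θ a : ℝ} (ha : 0 < a) (hθ : m0 + a ≤ θ) :
    (μ {x | (T:ℝ) * θ ≤ ∑ t, ω t x}).toReal ≤ exp (-(T:ℝ) * (a^2/(2*B^2))) := by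
  have hB2 : (0:ℝ) < B^2 := by positivity
  set s := a / B^2 with hs
  have hs0 : 0 ≤ s := by positivity
  have hsB : s^2*B^2/2 = a^2/(2*B^2) := by rw [hs]; field_simp
  have hexp : -s*θ + s*m0 + s^2*B^2/2 ≤ -(s^2*B^2/2) := by
    have h1 : s*a ≤ s*(θ - m0) := mul_le_mul_of_nonneg_left (by linarith) hs0
    have h2 : s*a = 2*(a^2/(2*B^2)) := by rw [hs]; field_simp
    have h3 : -s*θ + s*m0 = -(s*(θ - m0)) := by ring
    rw [hsB]
    linarith
  have h := my_chernoff_core ω hmeas hindep hB hb hm s θ hexp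
  rw [if_pos hs0, hsB] at h
  exact h

lemma my_chernoff_le {T : ℕ} (ω : Fin T → Ω → ℝ) (hmeas : ∀ t, Measurable (ω t))
    (hindep : iIndepFun ω μ) {B : ℝ} (hB : 0 < B)
    (hb : ∀ t, ∀ᵐ x ∂μ, |ω t x| ≤ B) {m0 : ℝ} (hm : ∀ t, ∫ x, ω t x ∂μ = m0)
    {θ a : ℝ} (ha : 0 < a) (hθ : θ ≤ m0 - a) :
    (μ {x | ∑ t, ω t x ≤ (T:ℝ) * θ}).toReal ≤ exp (-(T:ℝ) * (a^2/(2*B^2))) := by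
  have hB2 : (0:ℝ) < B^2 := by positivity
  set s := -(a / B^2) with hs
  have hs0 : s < 0 := by rw [hs]; simp; positivity
  have hsB : s^2*B^2/2 = a^2/(2*B^2) := by rw [hs]; field_simp
  have hexp : -s*θ + s*m0 + s^2*B^2/2 ≤ -(s^2*B^2/2) := by
    have h1 : s*(m0 - θ) ≤ s*a := by
      apply mul_le_mul_of_nonpos_left (by linarith) hs0.le
    have h2 : s*a = -(2*(a^2/(2*B^2))) := by rw [hs]; field_simp
    have h3 : -s*θ + s*m0 = s*(m0 - θ) := by ring
    have h4 : -s*θ + s*m0 ≤ -(2*(a^2/(2*B^2))) := by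
      rw [h3]; exact h1.trans (le_of_eq h2)
    rw [hsB]
    linarith [h4]
  have h := my_chernoff_core ω hmeas hindep hB hb hm s θ hexp
  rw [if_neg (not_le.2 hs0), hsB] at h
  exact h

end prob

section mat

variable {d : ℕ}

lemma my_psd_of_re {M : Matrix (Fin d) (Fin d) ℂ} (hM : M.IsHermitian)
    (h : ∀ x : Fin d → ℂ, 0 ≤ (star x ⬝ᵥ (M *ᵥ x)).re) : M.PosSemidef := by
  refine .of_dotProduct_mulVec_nonneg hM fun x => ?_
  have hself : star (star x ⬝ᵥ (M *ᵥ x)) = star x ⬝ᵥ (M *ᵥ x) := by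
    calc star (star x ⬝ᵥ (M *ᵥ x)) = star (M *ᵥ x) ⬝ᵥ x := by rw [star_dotProduct, star_star]
      _ = (star x ᵥ* Mᴴ) ⬝ᵥ x := by rw [star_mulVec]
      _ = star x ⬝ᵥ (Mᴴ *ᵥ x) := (dotProduct_mulVec _ _ _).symm
      _ = star x ⬝ᵥ (M *ᵥ x) := by rw [hM.eq]
  rw [Complex.le_def]
  constructor
  · simpa using h x
  · have := congrArg Complex.im hself
    simp only [Complex.star_def, Complex.conj_im] at this
    simp only [Complex.zero_im]
    linarith

lemma my_psi_norm {ψ : Fin d → ℂ} (hψ : ∑ i, ‖ψ i‖ ^ 2 = 1) : star ψ ⬝ᵥ ψ = 1 := by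
  have : ∀ i, star (ψ i) * ψ i = ((‖ψ i‖ ^ 2 : ℝ) : ℂ) := by
    intro i
    rw [Complex.star_def, ← Complex.normSq_eq_conj_mul_self, Complex.normSq_eq_norm_sq]
  calc star ψ ⬝ᵥ ψ = ∑ i, star (ψ i) * ψ i := rfl
    _ = ∑ i, ((‖ψ i‖ ^ 2 : ℝ) : ℂ) := by simp_rw [this]
    _ = ((∑ i, ‖ψ i‖ ^ 2 : ℝ) : ℂ) := by push_cast; ring
    _ = 1 := by rw [hψ]; norm_num


variable {d : ℕ}

lemma my_diag_nonneg {M : Matrix (Fin d) (Fin d) ℂ} (hM : M.PosSemidef) (i : Fin d) :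
    0 ≤ (M i i).re := by
  have h := hM.re_dotProduct_nonneg (Pi.single i 1)
  have : dotProduct (star (Pi.single i 1)) (M *ᵥ Pi.single i 1) = M i i := by
    simp [dotProduct, mulVec, Pi.single_apply, apply_ite (star : ℂ → ℂ), ite_mul,
      Finset.sum_ite_eq']
  rwa [this] at h

lemma my_trace_mul_re_nonneg {A B : Matrix (Fin d) (Fin d) ℂ}
    (hA : A.PosSemidef) (hB : B.PosSemidef) : 0 ≤ ((A * B).trace).re := by
  obtain ⟨C, rfl⟩ : ∃ C : Matrix (Fin d) (Fin d) ℂ, A = Cᴴ * C := by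
    open scoped MatrixOrder in exact CStarAlgebra.nonneg_iff_eq_star_mul_self.mp hA.nonneg
  have h1 : (Cᴴ * C * B).trace = (C * B * Cᴴ).trace :=
    (Matrix.trace_mul_cycle C B Cᴴ).symm
  rw [h1]
  have hpsd := hB.mul_mul_conjTranspose_same C
  rw [Matrix.trace]
  rw [Complex.re_sum]
  exact Finset.sum_nonneg fun i _ => my_diag_nonneg hpsd i


variable {d : ℕ}

lemma my_dot_self_re (v : Fin d → ℂ) : (star v ⬝ᵥ v).re = ∑ i, ‖v i‖ ^ 2 := by
  have : ∀ i, star (v i) * v i = ((‖v i‖ ^ 2 : ℝ) : ℂ) := by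
    intro i
    rw [Complex.star_def, ← Complex.normSq_eq_conj_mul_self, Complex.normSq_eq_norm_sq]
  have h2 : star v ⬝ᵥ v = ((∑ i, ‖v i‖ ^ 2 : ℝ) : ℂ) := by
    calc star v ⬝ᵥ v = ∑ i, star (v i) * v i := rfl
      _ = ∑ i, ((‖v i‖ ^ 2 : ℝ) : ℂ) := by simp_rw [this]
      _ = ((∑ i, ‖v i‖ ^ 2 : ℝ) : ℂ) := by push_cast; ring
  rw [h2, Complex.ofReal_re]

lemma my_P_herm (ψ : Fin d → ℂ) : (vecMulVec ψ (star ψ)).IsHermitian := by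
  ext i j
  simp [conjTranspose_apply, vecMulVec_apply, mul_comm]

lemma my_P_mulVec (ψ v : Fin d → ℂ) : vecMulVec ψ (star ψ) *ᵥ v = (star ψ ⬝ᵥ v) • ψ := by
  ext i
  simp only [mulVec, dotProduct, vecMulVec_apply, Pi.smul_apply, smul_eq_mul, Pi.star_apply]
  rw [Finset.sum_mul]
  exact Finset.sum_congr rfl fun j _ => by ring

section main
variable {L ρ : Matrix (Fin d) (Fin d) ℂ} {ψ : Fin d → ℂ} {τ : ℝ}

lemma my_vecstar_L (hL : L.IsHermitian) (hLψ : L *ᵥ ψ = ψ) : star ψ ᵥ* L = star ψ := by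
  have h : star (L *ᵥ ψ) = star ψ := by rw [hLψ]
  rwa [star_mulVec, hL.eq] at h

lemma my_decomp (hψ : ∑ i, ‖ψ i‖ ^ 2 = 1) (hL : L.IsHermitian) (hLψ : L *ᵥ ψ = ψ)
    (x : Fin d → ℂ) :
    star ψ ⬝ᵥ (x - (star ψ ⬝ᵥ x) • ψ) = 0 ∧
    star x ⬝ᵥ (L *ᵥ x) =
      star (x - (star ψ ⬝ᵥ x) • ψ) ⬝ᵥ (L *ᵥ (x - (star ψ ⬝ᵥ x) • ψ))
        + star (star ψ ⬝ᵥ x) * (star ψ ⬝ᵥ x) ∧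
    star x ⬝ᵥ x = star (x - (star ψ ⬝ᵥ x) • ψ) ⬝ᵥ (x - (star ψ ⬝ᵥ x) • ψ)
        + star (star ψ ⬝ᵥ x) * (star ψ ⬝ᵥ x) ∧
    star x ⬝ᵥ (vecMulVec ψ (star ψ) *ᵥ x) = star (star ψ ⬝ᵥ x) * (star ψ ⬝ᵥ x) := by
  have hψ1 : star ψ ⬝ᵥ ψ = 1 := my_psi_norm hψ
  set c : ℂ := star ψ ⬝ᵥ x with hc
  set y : Fin d → ℂ := x - c • ψ with hy
  have orth : star ψ ⬝ᵥ y = 0 := by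
    rw [hy, dotProduct_sub, dotProduct_smul, hψ1, smul_eq_mul, mul_one, hc, sub_self]
  have ydot : star y ⬝ᵥ ψ = 0 := by
    rw [star_dotProduct, orth, star_zero]
  have ψLy : star ψ ⬝ᵥ (L *ᵥ y) = 0 := by
    rw [dotProduct_mulVec, my_vecstar_L hL hLψ, orth]
  have hx : x = y + c • ψ := by rw [hy]; abel
  refine ⟨orth, ?_, ?_, ?_⟩
  · conv_lhs => rw [hx]
    simp only [star_add, star_smul, add_dotProduct, dotProduct_add, smul_dotProduct,
      dotProduct_smul, mulVec_add, mulVec_smul, hLψ, ψLy, ydot, hψ1, smul_eq_mul,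
      mul_zero, zero_add, add_zero, mul_one]
    ring
  · conv_lhs => rw [hx]
    simp only [star_add, star_smul, add_dotProduct, dotProduct_add, smul_dotProduct,
      dotProduct_smul, orth, ydot, hψ1, smul_eq_mul, mul_zero, zero_add, add_zero, mul_one]
    ring
  · rw [my_P_mulVec, dotProduct_smul, ← hc, smul_eq_mul]
    have : star x ⬝ᵥ ψ = star c := by rw [star_dotProduct, ← hc]
    rw [this]
    ring

lemma my_fid_le_trace (hψ : ∑ i, ‖ψ i‖ ^ 2 = 1) (hL : L.IsHermitian) (hL0 : L.PosSemidef)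
    (hLψ : L *ᵥ ψ = ψ) (hρ : ρ.PosSemidef) :
    (star ψ ⬝ᵥ (ρ *ᵥ ψ)).re ≤ ((L * ρ).trace).re := by
  have hpsd : (L - vecMulVec ψ (star ψ)).PosSemidef := by
    refine .of_dotProduct_mulVec_nonneg (hL.sub (my_P_herm ψ)) fun x => ?_
    obtain ⟨orth, hQL, _, hQP⟩ := my_decomp hψ hL hLψ x
    rw [sub_mulVec, dotProduct_sub, hQL, hQP, add_sub_cancel_right]
    exact hL0.dotProduct_mulVec_nonneg _
  have h := my_trace_mul_re_nonneg hpsd hρ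
  have hPρ : (vecMulVec ψ (star ψ) * ρ).trace = star ψ ⬝ᵥ (ρ *ᵥ ψ) := by
    simp only [Matrix.trace, Matrix.diag, Matrix.mul_apply, vecMulVec_apply, dotProduct,
      mulVec, Pi.star_apply]
    rw [Finset.sum_comm]
    refine Finset.sum_congr rfl fun j _ => ?_
    rw [Finset.mul_sum]
    refine Finset.sum_congr rfl fun i _ => by ring
  rw [Matrix.sub_mul, trace_sub, Complex.sub_re, hPρ] at h
  linarith

set_option maxHeartbeats 1000000 in
lemma my_trace_le_fid (hψ : ∑ i, ‖ψ i‖ ^ 2 = 1) (hL : L.IsHermitian)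
    (hL1 : ((1 : Matrix (Fin d) (Fin d) ℂ) - L).PosSemidef)
    (hLψ : L *ᵥ ψ = ψ) (hτ : 1 ≤ τ)
    (hgap : ∀ φ : Fin d → ℂ, (∑ i, ‖φ i‖ ^ 2 = 1) → (star ψ ⬝ᵥ φ = 0) →
      (star φ ⬝ᵥ (L *ᵥ φ)).re ≤ 1 - 1 / τ)
    (hρ : ρ.PosSemidef) (hρtr : ρ.trace = 1) :
    ((L * ρ).trace).re ≤ 1 - τ⁻¹ * (1 - (star ψ ⬝ᵥ (ρ *ᵥ ψ)).re) := by
  have hτ0 : 0 < τ := lt_of_lt_of_le one_pos hτ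
  have hMpsd : (((1 : Matrix (Fin d) (Fin d) ℂ) - L)
      - ((τ⁻¹ : ℝ) : ℂ) • ((1 : Matrix (Fin d) (Fin d) ℂ) - vecMulVec ψ (star ψ))).PosSemidef := by
    have hMherm : (((1 : Matrix (Fin d) (Fin d) ℂ) - L)
        - ((τ⁻¹ : ℝ) : ℂ) • ((1 : Matrix (Fin d) (Fin d) ℂ) - vecMulVec ψ (star ψ))).IsHermitian := by
      have h1 : ((1 : Matrix (Fin d) (Fin d) ℂ) - vecMulVec ψ (star ψ)).IsHermitian :=
        (Matrix.isHermitian_one).sub (my_P_herm ψ)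
      have h2 : (((τ⁻¹ : ℝ) : ℂ) • ((1 : Matrix (Fin d) (Fin d) ℂ) - vecMulVec ψ (star ψ))).IsHermitian := by
        unfold Matrix.IsHermitian
        rw [Matrix.conjTranspose_smul, h1.eq]
        norm_num
      exact hL1.1.sub h2
    refine my_psd_of_re hMherm fun x => ?_
    have hsplit : star x ⬝ᵥ ((((1 : Matrix (Fin d) (Fin d) ℂ) - L)
        - ((τ⁻¹ : ℝ) : ℂ) • ((1 : Matrix (Fin d) (Fin d) ℂ) - vecMulVec ψ (star ψ))) *ᵥ x)
        = (star x ⬝ᵥ x - star x ⬝ᵥ (L *ᵥ x))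
          - ((τ⁻¹ : ℝ) : ℂ) * (star x ⬝ᵥ x - star x ⬝ᵥ (vecMulVec ψ (star ψ) *ᵥ x)) := by
      simp only [sub_mulVec, smul_mulVec, one_mulVec, dotProduct_sub,
        dotProduct_smul, smul_eq_mul]
    obtain ⟨orth, hQL, hQid, hQP⟩ := my_decomp hψ hL hLψ x
    generalize hygen : x - (star ψ ⬝ᵥ x) • ψ = yv at orth hQL hQid
    rw [hsplit, hQL, hQid, hQP]
    set r : ℝ := ∑ i, ‖yv i‖ ^ 2 with hr
    have hrdot : (star yv ⬝ᵥ yv).re = r := my_dot_self_re yv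
    have hr0 : 0 ≤ r := Finset.sum_nonneg fun i _ => by positivity
    have hQLy : (star yv ⬝ᵥ (L *ᵥ yv)).re ≤ (1 - 1/τ) * r := by
      rcases eq_or_lt_of_le hr0 with h0 | h0
      · have hy0 : yv = 0 := by
          funext i
          have := (Finset.sum_eq_zero_iff_of_nonneg
            (fun i _ => by positivity : ∀ i ∈ Finset.univ, (0:ℝ) ≤ ‖yv i‖ ^ 2)).1 h0.symm i
            (Finset.mem_univ i)
          simpa [pow_eq_zero_iff] using this
        rw [hy0]
        simp [← h0]
      · set c0 : ℝ := (Real.sqrt r)⁻¹ with hc0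
        have hsq : Real.sqrt r > 0 := Real.sqrt_pos.2 h0
        have hc0pos : 0 < c0 := by positivity
        have hφnorm : ∑ i, ‖((c0 : ℂ) • yv) i‖ ^ 2 = 1 := by
          simp only [Pi.smul_apply, norm_smul, mul_pow, Complex.norm_real,
            Real.norm_eq_abs, abs_of_pos hc0pos]
          rw [← Finset.mul_sum, ← hr, hc0, ← Real.sqrt_inv, Real.sq_sqrt (by positivity)]
          field_simp
        have hφorth : star ψ ⬝ᵥ ((c0 : ℂ) • yv) = 0 := by
          rw [dotProduct_smul, orth, smul_zero]
        have hg := hgap ((c0 : ℂ) • yv) hφnorm hφorth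
        have hφL : (star ((c0 : ℂ) • yv) ⬝ᵥ (L *ᵥ ((c0 : ℂ) • yv))).re
            = c0^2 * (star yv ⬝ᵥ (L *ᵥ yv)).re := by
          rw [star_smul, smul_dotProduct, mulVec_smul, dotProduct_smul]
          simp only [smul_eq_mul, ← mul_assoc]
          rw [Complex.star_def, Complex.conj_ofReal,
            show ((c0:ℂ) * (c0:ℂ)) = ((c0^2 : ℝ) : ℂ) by push_cast; ring,
            Complex.re_ofReal_mul]
        have hc0r : c0^2 * r = 1 := by
          rw [hc0, ← Real.sqrt_inv, Real.sq_sqrt (by positivity)]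
          field_simp
        rw [hφL] at hg
        calc (star yv ⬝ᵥ (L *ᵥ yv)).re
            = (star yv ⬝ᵥ (L *ᵥ yv)).re * (c0^2 * r) := by rw [hc0r, mul_one]
          _ = (c0^2 * (star yv ⬝ᵥ (L *ᵥ yv)).re) * r := by ring
          _ ≤ (1 - 1/τ) * r := mul_le_mul_of_nonneg_right hg hr0
    simp only [Complex.sub_re, Complex.add_re, Complex.re_ofReal_mul]
    rw [hrdot]
    have hτinv : τ⁻¹ ≤ 1 := by
      rw [inv_le_one_iff₀]; right; exact hτ
    have h1τ : 1/τ = τ⁻¹ := one_div τ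
    rw [h1τ] at hQLy
    nlinarith [hQLy, hr0]
  have h := my_trace_mul_re_nonneg hMpsd hρ
  have hPρ : (vecMulVec ψ (star ψ) * ρ).trace = star ψ ⬝ᵥ (ρ *ᵥ ψ) := by
    simp only [Matrix.trace, Matrix.diag, Matrix.mul_apply, vecMulVec_apply, dotProduct,
      mulVec, Pi.star_apply]
    rw [Finset.sum_comm]
    refine Finset.sum_congr rfl fun j _ => ?_
    rw [Finset.mul_sum]
    refine Finset.sum_congr rfl fun i _ => by ring
  have hexpand : ((((1 : Matrix (Fin d) (Fin d) ℂ) - L)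
      - ((τ⁻¹ : ℝ) : ℂ) • ((1 : Matrix (Fin d) (Fin d) ℂ) - vecMulVec ψ (star ψ))) * ρ).trace
      = ρ.trace - (L * ρ).trace
        - ((τ⁻¹ : ℝ) : ℂ) * (ρ.trace - (vecMulVec ψ (star ψ) * ρ).trace) := by
    rw [Matrix.sub_mul, Matrix.sub_mul, Matrix.smul_mul, Matrix.sub_mul, Matrix.one_mul,
      trace_sub, trace_sub, trace_smul, trace_sub, smul_eq_mul]
  rw [hexpand, hρtr, hPρ] at h
  simp only [Complex.sub_re, Complex.one_re, Complex.re_ofReal_mul] at h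
  linarith

end main

end mat

/-- Corrected completeness and soundness of the original level-`m` shadow overlap certification
protocol: with `T ≥ 2^(4m+3)·(τ²/ε²)·ln(2/δ)` iid samples of the single-trial shadow overlap
(mean `tr(Lρ)`, bounded by `2^(2m-1)`) and threshold `1 − 3ε/(4τ)`, low-fidelity states are
rejected and high-fidelity states are accepted, except with probability `δ`. -/
theorem original_protocol_completeness_soundness {d : ℕ}
    (L ρ : Matrix (Fin d) (Fin d) ℂ)
    (hL : L.IsHermitian) (hL0 : L.PosSemidef)
    (hL1 : ((1 : Matrix (Fin d) (Fin d) ℂ) - L).PosSemidef)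
    (ψ : Fin d → ℂ) (hψ : ∑ i, ‖ψ i‖ ^ 2 = 1) (hLψ : L *ᵥ ψ = ψ)
    (τ : ℝ) (hτ : 1 ≤ τ)
    (hgap : ∀ φ : Fin d → ℂ, (∑ i, ‖φ i‖ ^ 2 = 1) → (star ψ ⬝ᵥ φ = 0) →
      (star φ ⬝ᵥ (L *ᵥ φ)).re ≤ 1 - 1 / τ)
    (hρ : ρ.PosSemidef) (hρtr : ρ.trace = 1)
    {Ω : Type*} [MeasurableSpace Ω] (μ : Measure Ω) [IsProbabilityMeasure μ]
    (m T : ℕ) (hm : 1 ≤ m) (ε δ : ℝ) (hε : 0 < ε) (hδ : δ ∈ Set.Ioo (0 : ℝ) 1)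
    (ω : Fin T → Ω → ℝ) (hmeas : ∀ t, Measurable (ω t))
    (hindep : iIndepFun ω μ)
    (hident : ∀ t t', Measure.map (ω t) μ = Measure.map (ω t') μ)
    (hmean : ∀ t, ∫ x, ω t x ∂μ = ((L * ρ).trace).re)
    (hbound : ∀ t, ∀ᵐ x ∂μ, |ω t x| ≤ 2 ^ (2 * m - 1))
    (hT : (T : ℝ) ≥ 2 ^ (4 * m + 3) * (τ ^ 2 / ε ^ 2) * Real.log (2 / δ)) :
    ((star ψ ⬝ᵥ (ρ *ᵥ ψ)).re < 1 - ε →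
      μ {x | (∑ t, ω t x) / T ≥ 1 - 3 * ε / (4 * τ)} ≤ ENNReal.ofReal δ) ∧
    ((star ψ ⬝ᵥ (ρ *ᵥ ψ)).re ≥ 1 - ε / (2 * τ) →
      μ {x | (∑ t, ω t x) / T < 1 - 3 * ε / (4 * τ)} ≤ ENNReal.ofReal δ) := by
  have hτ0 : (0:ℝ) < τ := lt_of_lt_of_le one_pos hτ
  have hδ0 : 0 < δ := hδ.1
  have hδ1 : δ < 1 := hδ.2
  have hlog : 0 < Real.log (2/δ) := Real.log_pos (by rw [lt_div_iff₀ hδ0]; linarith)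
  have hTpos : (0:ℝ) < T := lt_of_lt_of_le (by positivity) hT
  set B : ℝ := 2 ^ (2 * m - 1) with hB
  have hBpos : 0 < B := by positivity
  set a : ℝ := ε / (4*τ) with ha
  have hapos : 0 < a := by positivity
  set m0 : ℝ := ((L * ρ).trace).re with hm0
  set F : ℝ := (star ψ ⬝ᵥ (ρ *ᵥ ψ)).re with hF
  have hFle : F ≤ m0 := my_fid_le_trace hψ hL hL0 hLψ hρ
  have hTle : m0 ≤ 1 - τ⁻¹ * (1 - F) := my_trace_le_fid hψ hL hL1 hLψ hτ hgap hρ hρtr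
  have hq : a^2/(2*B^2) = ε^2 / (τ^2 * 2^(4*m+3)) := by
    have hBsq : B^2 = 2^(4*m - 2) := by
      rw [hB, ← pow_mul]; congr 1; omega
    have h2pow : (2:ℝ)^(4*m+3) = 2^(4*m - 2) * 32 := by
      rw [show 4*m+3 = (4*m - 2)+5 by omega, pow_add]; norm_num
    rw [ha, hBsq, h2pow]
    have hp : (0:ℝ) < 2^(4*m - 2) := by positivity
    field_simp
    ring
  have hexpδ : Real.exp (-(T:ℝ) * (a^2/(2*B^2))) ≤ δ := by
    have hnum : Real.log (2/δ) ≤ (T:ℝ) * (a^2/(2*B^2)) := by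
      have hp : (0:ℝ) < 2^(4*m+3) := by positivity
      calc Real.log (2/δ)
          = (2^(4*m+3) * (τ^2/ε^2) * Real.log (2/δ)) * (ε^2/(τ^2 * 2^(4*m+3))) := by
            field_simp
        _ ≤ (T:ℝ) * (ε^2/(τ^2 * 2^(4*m+3))) :=
            mul_le_mul_of_nonneg_right hT (by positivity)
        _ = (T:ℝ) * (a^2/(2*B^2)) := by rw [hq]
    calc Real.exp (-(T:ℝ) * (a^2/(2*B^2)))
        ≤ Real.exp (-(Real.log (2/δ))) := Real.exp_le_exp.2 (by linarith)
      _ = δ/2 := by rw [Real.exp_neg, Real.exp_log (by positivity), inv_div]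
      _ ≤ δ := by linarith
  have h3a : 3 * ε / (4*τ) = 3*a := by rw [ha]; ring
  constructor
  · -- soundness
    intro hFlt
    have h1 : ε * τ⁻¹ ≤ (1 - F) * τ⁻¹ :=
      mul_le_mul_of_nonneg_right (by linarith) (by positivity)
    have h5 : ε * τ⁻¹ = 4*a := by rw [ha]; field_simp
    have hm0le : m0 ≤ 1 - 4*a := by
      have hcomm : τ⁻¹ * (1 - F) = (1 - F) * τ⁻¹ := mul_comm _ _
      rw [hcomm] at hTle
      linarith
    have key : m0 + a ≤ 1 - 3 * ε / (4*τ) := by rw [h3a]; linarith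
    have hset : {x | (∑ t, ω t x)/(T:ℝ) ≥ 1 - 3 * ε / (4*τ)}
        = {x | (T:ℝ) * (1 - 3 * ε / (4*τ)) ≤ ∑ t, ω t x} := by
      ext x
      simp only [Set.mem_setOf_eq, ge_iff_le]
      rw [le_div_iff₀ hTpos, mul_comm]
    rw [hset]
    have hch := my_chernoff_ge ω hmeas hindep hBpos hbound hmean hapos key
    exact (ENNReal.le_ofReal_iff_toReal_le (measure_ne_top μ _) hδ0.le).2
      (hch.trans hexpδ)
  · -- completeness
    intro hFge
    have h2a : ε / (2*τ) = 2*a := by rw [ha]; ring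
    have hm0ge : 1 - 2*a ≤ m0 := by
      rw [← h2a]
      exact le_trans (by linarith) hFle
    have key : 1 - 3 * ε / (4*τ) ≤ m0 - a := by rw [h3a]; linarith
    have hsub : {x | (∑ t, ω t x)/(T:ℝ) < 1 - 3 * ε / (4*τ)}
        ⊆ {x | ∑ t, ω t x ≤ (T:ℝ) * (1 - 3 * ε / (4*τ))} := by
      intro x hx
      simp only [Set.mem_setOf_eq] at hx ⊢
      have := (div_lt_iff₀ hTpos).1 hx
      rw [mul_comm]
      linarith
    have hch := my_chernoff_le ω hmeas hindep hBpos hbound hmean hapos key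
    calc μ {x | (∑ t, ω t x)/(T:ℝ) < 1 - 3 * ε / (4*τ)}
        ≤ μ {x | ∑ t, ω t x ≤ (T:ℝ) * (1 - 3 * ε / (4*τ))} := measure_mono hsub
      _ ≤ ENNReal.ofReal δ :=
          (ENNReal.le_ofReal_iff_toReal_le (measure_ne_top μ _) hδ0.le).2
            (hch.trans hexpδ)
end
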